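/- For any finite sequence x_1,...,x_m of vectors in C^n and any integer k ≥ 1, the inequality binom(n+k-1, k) · Σ_{i,j} |⟨x_i, x_j⟩|^{2k} ≥ (Σ_i ⟨x_i, x_i⟩^k)^2 holds. -/

import Mathlib

open Finset in
theorem welch_key (n k : ℕ) (u v : EuclideanSpace ℂ (Fin n)) :
    (inner ℂ u v : ℂ) ^ k = ∑ μ ∈ (Finset.univ : Finset (Fin n)).sym k,
      (starRingEnd ℂ) ((Real.sqrt μ.val.countPerms : ℂ) * (μ.val.map u).prod) *
      ((Real.sqrt μ.val.countPerms : ℂ) * (μ.val.map v).prod) := by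
  have h1 : (inner ℂ u v : ℂ) = ∑ t : Fin n, (starRingEnd ℂ) (u t) * v t := by
    simp [PiLp.inner_apply, RCLike.inner_apply, mul_comm]
  rw [h1, Finset.sum_pow]
  refine Finset.sum_congr rfl fun μ _ => Eq.symm ?_
  have hc : (starRingEnd ℂ) ((Real.sqrt μ.val.countPerms : ℂ)) = (Real.sqrt μ.val.countPerms : ℂ) :=
    Complex.conj_ofReal _
  have hconj : (starRingEnd ℂ) ((μ.val.map u).prod) = (μ.val.map (fun t => (starRingEnd ℂ) (u t))).prod := by
    rw [map_multiset_prod, Multiset.map_map]; rfl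
  rw [map_mul, hc, hconj]
  have : (μ.val.map (fun t => (starRingEnd ℂ) (u t))).prod * (μ.val.map v).prod
      = (μ.val.map (fun t => (starRingEnd ℂ) (u t) * v t)).prod := by
    rw [← Multiset.prod_map_mul]
  have hs : (Real.sqrt μ.val.countPerms : ℂ) * (Real.sqrt μ.val.countPerms : ℂ)
      = (μ.val.countPerms : ℂ) := by
    rw [← Complex.ofReal_mul, Real.mul_self_sqrt (Nat.cast_nonneg _)]
    push_cast; ring
  calc (Real.sqrt μ.val.countPerms : ℂ) * (μ.val.map (fun t => (starRingEnd ℂ) (u t))).prod *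
        ((Real.sqrt μ.val.countPerms : ℂ) * (μ.val.map v).prod)
      = ((Real.sqrt μ.val.countPerms : ℂ) * (Real.sqrt μ.val.countPerms : ℂ)) *
        ((μ.val.map (fun t => (starRingEnd ℂ) (u t))).prod * (μ.val.map v).prod) := by ring
    _ = (μ.val.countPerms : ℂ) * (μ.val.map (fun t => (starRingEnd ℂ) (u t) * v t)).prod := by
        rw [hs, this]
    _ = _ := by rfl

theorem welch_bounds (n m k : ℕ) (hk : 1 ≤ k)
    (x : Fin m → EuclideanSpace ℂ (Fin n)) :
    ((n + k - 1).choose k : ℝ) *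
      ∑ i, ∑ j, ‖(inner ℂ (x i) (x j) : ℂ)‖ ^ (2 * k) ≥
    (∑ i, ‖x i‖ ^ (2 * k)) ^ 2 := by
  classical
  set M : Matrix (Fin m) (Sym (Fin n) k) ℂ := fun i μ =>
    (Real.sqrt μ.val.countPerms : ℂ) * (μ.val.map (x i)).prod with hM
  have hsymuniv : (Finset.univ : Finset (Fin n)).sym k = Finset.univ := by
    ext μ; simp [Finset.mem_sym_iff]
  have key : ∀ i j, (inner ℂ (x i) (x j) : ℂ) ^ k
      = ∑ μ, (starRingEnd ℂ) (M i μ) * M j μ := by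
    intro i j
    rw [welch_key n k (x i) (x j), hsymuniv]
  have mulconj : ∀ z : ℂ, z * (starRingEnd ℂ) z = ((‖z‖ ^ 2 : ℝ) : ℂ) := fun z => by
    rw [RCLike.mul_conj]; norm_cast
  have conjmul : ∀ z : ℂ, (starRingEnd ℂ) z * z = ((‖z‖ ^ 2 : ℝ) : ℂ) := fun z => by
    rw [mul_comm]; exact mulconj z
  -- diagonal identity
  have hdiag : ∀ i, ‖x i‖ ^ (2 * k) = ∑ μ, ‖M i μ‖ ^ 2 := by
    intro i
    have h1 : ((‖x i‖ ^ (2 * k) : ℝ) : ℂ) = (inner ℂ (x i) (x i) : ℂ) ^ k := by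
      rw [inner_self_eq_norm_sq_to_K]
      rw [← pow_mul]; norm_cast
    rw [key] at h1
    have h2 : ((‖x i‖ ^ (2 * k) : ℝ) : ℂ) = ((∑ μ, ‖M i μ‖ ^ 2 : ℝ) : ℂ) := by
      rw [h1]; push_cast
      exact Finset.sum_congr rfl fun μ _ => by rw [conjmul]; push_cast; ring
    exact_mod_cast h2
  set A : Matrix (Fin m) (Fin m) ℂ := M * M.conjTranspose with hA
  set B : Matrix (Sym (Fin n) k) (Sym (Fin n) k) ℂ := M.conjTranspose * M with hB
  have htrace : (A * A).trace = (B * B).trace := by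
    rw [hA, hB, Matrix.mul_assoc M M.conjTranspose (M * M.conjTranspose),
      Matrix.trace_mul_comm, Matrix.mul_assoc, Matrix.mul_assoc, ← Matrix.mul_assoc]
  -- entries
  have hAentry : ∀ i j, A i j = (starRingEnd ℂ) ((inner ℂ (x i) (x j) : ℂ) ^ k) := by
    intro i j
    rw [key]
    simp [hA, Matrix.mul_apply, Matrix.conjTranspose_apply, mul_comm]
  have hBconj : ∀ μ ν, B ν μ = (starRingEnd ℂ) (B μ ν) := by
    intro μ ν
    simp only [hB, Matrix.mul_apply, Matrix.conjTranspose_apply, map_sum, map_mul,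
      RingHomCompTriple.comp_apply, RCLike.conj_conj]
    exact Finset.sum_congr rfl fun i _ => by rw [mul_comm]; simp
  have hAA : (A * A).trace = ((∑ i, ∑ j, ‖(inner ℂ (x i) (x j) : ℂ)‖ ^ (2 * k) : ℝ) : ℂ) := by
    push_cast
    rw [Matrix.trace]
    refine Finset.sum_congr rfl fun i _ => ?_
    rw [Matrix.diag_apply, Matrix.mul_apply]
    refine Finset.sum_congr rfl fun j _ => ?_
    have hji : A j i = (inner ℂ (x i) (x j) : ℂ) ^ k := by
      rw [hAentry j i, ← inner_conj_symm (x i) (x j)]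
      simp
    rw [hAentry i j, hji, conjmul]
    push_cast
    rw [norm_pow]
    push_cast
    ring
  have hBB : (B * B).trace = ((∑ μ, ∑ ν, ‖B μ ν‖ ^ 2 : ℝ) : ℂ) := by
    push_cast
    rw [Matrix.trace]
    refine Finset.sum_congr rfl fun μ _ => ?_
    rw [Matrix.diag_apply, Matrix.mul_apply]
    exact Finset.sum_congr rfl fun ν _ => by rw [hBconj μ ν, mulconj]; push_cast; ring
  have hmain : (∑ i, ∑ j, ‖(inner ℂ (x i) (x j) : ℂ)‖ ^ (2 * k) : ℝ)
      = ∑ μ, ∑ ν, ‖B μ ν‖ ^ 2 := by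
    have := hAA.symm.trans (htrace.trans hBB)
    exact_mod_cast this
  set D : Sym (Fin n) k → ℝ := fun μ => ∑ i, ‖M i μ‖ ^ 2 with hD
  have hDnonneg : ∀ μ, 0 ≤ D μ := fun μ => Finset.sum_nonneg fun i _ => sq_nonneg _
  have hBdiag : ∀ μ, B μ μ = ((D μ : ℝ) : ℂ) := by
    intro μ
    simp only [hB, Matrix.mul_apply, Matrix.conjTranspose_apply, hD]
    push_cast
    exact Finset.sum_congr rfl fun i _ => by simpa using conjmul (M i μ)
  have hDsq : ∀ μ, D μ ^ 2 ≤ ∑ ν, ‖B μ ν‖ ^ 2 := by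
    intro μ
    have h1 : D μ ^ 2 = ‖B μ μ‖ ^ 2 := by
      rw [hBdiag, Complex.norm_real, Real.norm_eq_abs, abs_of_nonneg (hDnonneg μ)]
    rw [h1]
    exact Finset.single_le_sum (f := fun ν => ‖B μ ν‖ ^ 2) (fun ν _ => sq_nonneg _)
      (Finset.mem_univ μ)
  have hcard : (Fintype.card (Sym (Fin n) k) : ℝ) = ((n + k - 1).choose k : ℝ) := by
    rw [Sym.card_sym_eq_choose, Fintype.card_fin]
  calc (∑ i, ‖x i‖ ^ (2 * k)) ^ 2
      = (∑ μ, D μ) ^ 2 := by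
        rw [show (∑ i, ‖x i‖ ^ (2 * k)) = ∑ μ, D μ by
          simp_rw [hdiag]; rw [Finset.sum_comm]]
    _ ≤ (Fintype.card (Sym (Fin n) k) : ℝ) * ∑ μ, D μ ^ 2 := by
        simpa using sq_sum_le_card_mul_sum_sq (s := (Finset.univ : Finset (Sym (Fin n) k))) (f := D)
    _ ≤ (Fintype.card (Sym (Fin n) k) : ℝ) * ∑ μ, ∑ ν, ‖B μ ν‖ ^ 2 := by
        refine mul_le_mul_of_nonneg_left ?_ (Nat.cast_nonneg _)
        exact Finset.sum_le_sum fun μ _ => hDsq μ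
    _ = ((n + k - 1).choose k : ℝ) * ∑ i, ∑ j, ‖(inner ℂ (x i) (x j) : ℂ)‖ ^ (2 * k) := by
        rw [hcard, hmain]
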